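/- arXiv:2111.04663 — 2 statements merged into one kernel-verified Lean document; each statement's English description precedes it below -/
import Mathlib

section
/- Let ξ̂₁,…,ξ̂_N ∈ ℝᵐ, μ ∈ ℝ, ε > 0, and let 𝒳 = { x ∈ ℝᵐ : Σ_{i=1}^m x_i = 1, x_i ≥ 0 for all i }. For x ∈ 𝒳 let P̂^{x}_N = (1/N) Σᵢ δ_{⟨x,ξ̂ᵢ⟩}, let m̂_N = (1/N) Σᵢ ξ̂ᵢ be the sample mean vector, and let Σ̂_N = (1/N) Σᵢ (ξ̂ᵢ − m̂_N)(ξ̂ᵢ − m̂_N)ᵀ be the biased sample covariance matrix. Then inf{ sup{ Var_{ζ∼Q}[ζ] : Q ∈ 𝒫₂(ℝ), W₂(Q, P̂^{x}_N) ≤ ε ‖x‖₂ } : x ∈ 𝒳, inf{ E_{ζ∼Q}[ζ] : Q ∈ 𝒫₂(ℝ), W₂(Q, P̂^{x}_N) ≤ ε ‖x‖₂ } ≥ μ } equals inf{ ( sqrt(⟨x, Σ̂_N x⟩) + ε ‖x‖₂ )² : x ∈ 𝒳, ⟨m̂_N, x⟩ − ε ‖x‖₂ ≥ μ } (both values taken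 in the extended reals). -/
open MeasureTheory
open scoped ENNReal

/-- The `p`-th power transport cost of a coupling `π` with ground cost `d`. -/
noncomputable def transportCost {α : Type*} [MeasurableSpace α]
    (p : ℝ) (d : α → α → ℝ) (π : Measure (α × α)) : ℝ≥0∞ :=
  ∫⁻ w, ENNReal.ofReal (d w.1 w.2 ^ p) ∂π

/-- The `p`-Wasserstein distance between `μ` and `ν` with ground cost `d`:
the infimum of the `p`-th root of the transport cost over all couplings. -/
noncomputable def wassersteinDist {α : Type*} [MeasurableSpace α]
    (p : ℝ) (d : α → α → ℝ) (μ ν : Measure α) : ℝ≥0∞ :=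
  (⨅ (π : Measure (α × α)) (_ : IsProbabilityMeasure π ∧
      π.map Prod.fst = μ ∧ π.map Prod.snd = ν), transportCost p d π) ^ (1 / p)

/-- The empirical distribution of the points `ξ 1, …, ξ N`. -/
noncomputable def empMeasure {α : Type*} [MeasurableSpace α] {N : ℕ}
    (ξ : Fin N → α) : Measure α :=
  (N : ℝ≥0∞)⁻¹ • ∑ i, Measure.dirac (ξ i)
open scoped RealInnerProductSpace

/-- Probability measures on `ℝ` supported on `S`, with finite `p`-th moment, within
`p`-Wasserstein distance (with cost `|·|`) `ε` of `ν`. -/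
def realWassersteinBall (p : ℝ) (S : Set ℝ) (ν : Measure ℝ) (ε : ℝ) : Set (Measure ℝ) :=
  {Q | IsProbabilityMeasure Q ∧ Q Sᶜ = 0 ∧
    (∫⁻ t, ENNReal.ofReal (|t| ^ p) ∂Q) < ⊤ ∧
    wassersteinDist p (fun a b => |a - b|) Q ν ≤ ENNReal.ofReal ε}

/-- The sample mean vector of `ξ 1, …, ξ N`. -/
noncomputable def sampleMean {m N : ℕ} (ξh : Fin N → EuclideanSpace ℝ (Fin m)) :
    Fin m → ℝ :=
  fun j => (1 / (N : ℝ)) * ∑ i, ξh i j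

/-- The biased sample covariance matrix of `ξ 1, …, ξ N`. -/
noncomputable def sampleCov {m N : ℕ} (ξh : Fin N → EuclideanSpace ℝ (Fin m)) :
    Matrix (Fin m) (Fin m) ℝ :=
  fun j k => (1 / (N : ℝ)) * ∑ i, (ξh i j - sampleMean ξh j) * (ξh i k - sampleMean ξh k)

section aux

theorem MeasureTheory.MemLp.variance_eq {Ω : Type*} [MeasurableSpace Ω] {μ : Measure Ω}
    [IsFiniteMeasure μ] {X : Ω → ℝ} (hX : MemLp X 2 μ) :
    ProbabilityTheory.variance X μ = ∫ ω, (((X - fun _ => ∫ ω', X ω' ∂μ) ^ 2 : Ω → ℝ)) ω ∂μ := by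
  rw [ProbabilityTheory.variance_eq_integral hX.aemeasurable]; rfl

lemma my_integrable_dirac {α : Type*} [MeasurableSpace α] [MeasurableSingletonClass α]
    (f : α → ℝ) (a : α) : Integrable f (Measure.dirac a) := by
  have h : f =ᵐ[Measure.dirac a] fun _ => f a := by
    rw [MeasureTheory.ae_dirac_eq]; exact Filter.eventually_pure.2 rfl
  exact (integrable_const (f a)).congr h.symm

lemma memLp_of_moment {Q : Measure ℝ}
    (h : (∫⁻ t, ENNReal.ofReal (|t| ^ (2:ℝ)) ∂Q) < ⊤) :
    MemLp (id : ℝ → ℝ) 2 Q := by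
  refine ⟨measurable_id.aestronglyMeasurable, ?_⟩
  rw [eLpNorm_eq_lintegral_rpow_enorm_toReal (by norm_num) (by norm_num)]
  have : ∀ t : ℝ, ‖t‖ₑ ^ ((2:ℝ≥0∞).toReal) = ENNReal.ofReal (|t| ^ (2:ℝ)) := by
    intro t
    rw [← ofReal_norm_eq_enorm, ENNReal.toReal_ofNat,
      ENNReal.ofReal_rpow_of_nonneg (norm_nonneg t) (by norm_num)]
    norm_num [Real.norm_eq_abs]
  simp only [id_eq, this]
  exact ENNReal.rpow_lt_top_of_nonneg (by norm_num) h.ne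

variable {N : ℕ} (hN : 0 < N) (y : Fin N → ℝ)

lemma empMeasure_prob {α : Type*} [MeasurableSpace α] {N' : ℕ} (y : Fin N' → α)
    (hN : 0 < N') : IsProbabilityMeasure (empMeasure y) := by
  constructor
  simp only [empMeasure, Measure.smul_apply, Measure.finset_sum_apply, measure_univ,
    Finset.sum_const, Finset.card_univ, Fintype.card_fin, nsmul_eq_mul, mul_one, smul_eq_mul]
  exact ENNReal.inv_mul_cancel (by exact_mod_cast hN.ne') (ENNReal.natCast_ne_top N')

lemma lintegral_empMeasure {α : Type*} [MeasurableSpace α] [MeasurableSingletonClass α]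
    {N' : ℕ} (y : Fin N' → α) (f : α → ℝ≥0∞) :
    ∫⁻ t, f t ∂(empMeasure y) = (N' : ℝ≥0∞)⁻¹ * ∑ i, f (y i) := by
  simp [empMeasure, lintegral_smul_measure, lintegral_finset_sum_measure, lintegral_dirac]

lemma integral_empMeasure (f : ℝ → ℝ) :
    ∫ t, f t ∂(empMeasure y) = (1 / (N:ℝ)) * ∑ i, f (y i) := by
  rw [empMeasure, integral_smul_measure,
    integral_finset_sum_measure (fun i _ => my_integrable_dirac f (y i))]
  simp only [ENNReal.toReal_inv, ENNReal.toReal_natCast, smul_eq_mul, integral_dirac]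
  rw [one_div]

end aux

section emp
variable {N : ℕ} (y : Fin N → ℝ)

lemma moment_empMeasure (hN : 0 < N) :
    (∫⁻ t, ENNReal.ofReal (|t| ^ (2:ℝ)) ∂(empMeasure y)) < ⊤ := by
  rw [lintegral_empMeasure]
  exact ENNReal.mul_lt_top (ENNReal.inv_lt_top.2 (by exact_mod_cast hN))
    (ENNReal.sum_lt_top.2 fun i _ => ENNReal.ofReal_lt_top)

lemma memLp_empMeasure (hN : 0 < N) : MemLp (id : ℝ → ℝ) 2 (empMeasure y) :=
  memLp_of_moment (moment_empMeasure y hN)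

lemma mean_empMeasure : ∫ t, t ∂(empMeasure y) = (1 / (N:ℝ)) * ∑ i, y i :=
  integral_empMeasure y _

lemma variance_empMeasure (hN : 0 < N) :
    ProbabilityTheory.variance id (empMeasure y)
      = (1 / (N:ℝ)) * ∑ i, (y i - (1 / (N:ℝ)) * ∑ i, y i) ^ 2 := by
  haveI := empMeasure_prob y hN
  rw [(memLp_empMeasure y hN).variance_eq]
  have h2 : ((id : ℝ → ℝ) - fun _ => ∫ t, t ∂(empMeasure y)) ^ 2
      = fun t => (t - (1 / (N:ℝ)) * ∑ i, y i) ^ 2 := by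
    funext t; simp [mean_empMeasure y]
  simp only [id_eq]
  rw [h2, integral_empMeasure]

lemma empMeasure_map {α β : Type*} [MeasurableSpace α] [MeasurableSpace β]
    {f : α → β} (hf : Measurable f) (z : Fin N → α) :
    (empMeasure z).map f = empMeasure (f ∘ z) := by
  ext s hs
  rw [Measure.map_apply hf hs]
  simp only [empMeasure, Measure.smul_apply, Measure.finset_sum_apply, smul_eq_mul]
  congr 1
  refine Finset.sum_congr rfl fun i _ => ?_
  rw [Measure.dirac_apply' _ (hf hs), Measure.dirac_apply' _ hs]
  by_cases h : f (z i) ∈ s <;> simp [Set.indicator_apply, Set.mem_preimage, h, Function.comp]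

lemma empMeasure_const {α : Type*} [MeasurableSpace α] (hN : 0 < N) (a : α) :
    empMeasure (fun _ : Fin N => a) = Measure.dirac a := by
  rw [empMeasure]
  simp only [Finset.sum_const, Finset.card_univ, Fintype.card_fin]
  rw [← Nat.cast_smul_eq_nsmul ℝ≥0∞, smul_smul, ENNReal.inv_mul_cancel
    (by exact_mod_cast hN.ne') (ENNReal.natCast_ne_top N), one_smul]

end emp

section coupling
open ProbabilityTheory

lemma cost_eq (π : Measure (ℝ × ℝ)) :
    transportCost 2 (fun a b => |a - b|) π = ∫⁻ w, ENNReal.ofReal ((w.1 - w.2) ^ 2) ∂π := by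
  unfold transportCost
  congr 1; funext w
  rw [show ((2:ℝ)) = ((2:ℕ):ℝ) by norm_num, Real.rpow_natCast, sq_abs]

lemma coupling_bounds {Q ν' : Measure ℝ} [IsProbabilityMeasure Q] [IsProbabilityMeasure ν']
    (hQ : MemLp (id : ℝ → ℝ) 2 Q) (hν : MemLp (id : ℝ → ℝ) 2 ν')
    {π : Measure (ℝ × ℝ)} (hπ : IsProbabilityMeasure π)
    (h1 : π.map Prod.fst = Q) (h2 : π.map Prod.snd = ν') :
    ENNReal.ofReal (((∫ t, t ∂Q) - ∫ t, t ∂ν') ^ 2) ≤ transportCost 2 (fun a b => |a - b|) π ∧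
    ENNReal.ofReal ((Real.sqrt (variance id Q) - Real.sqrt (variance id ν')) ^ 2)
      ≤ transportCost 2 (fun a b => |a - b|) π := by
  have hf : MemLp (fun w : ℝ × ℝ => w.1) 2 π := by
    simpa [Function.comp] using hQ.comp_measurePreserving ⟨measurable_fst, h1⟩
  have hg : MemLp (fun w : ℝ × ℝ => w.2) 2 π := by
    simpa [Function.comp] using hν.comp_measurePreserving ⟨measurable_snd, h2⟩
  have hh : MemLp (fun w : ℝ × ℝ => w.1 - w.2) 2 π := hf.sub hg
  have hint : Integrable (fun w : ℝ × ℝ => (w.1 - w.2) ^ 2) π := hh.integrable_sq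
  have costeq : transportCost 2 (fun a b => |a - b|) π
      = ENNReal.ofReal (∫ w : ℝ × ℝ, (w.1 - w.2) ^ 2 ∂π) := by
    rw [cost_eq, ← ofReal_integral_eq_lintegral_ofReal hint (ae_of_all _ fun w => sq_nonneg _)]
  rw [costeq]
  set a : ℝ := ∫ w : ℝ × ℝ, w.1 ∂π with ha
  set b : ℝ := ∫ w : ℝ × ℝ, w.2 ∂π with hb
  have hEf : ∫ t, t ∂Q = a := by
    rw [← h1]
    exact integral_map measurable_fst.aemeasurable measurable_id.aestronglyMeasurable
  have hEg : ∫ t, t ∂ν' = b := by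
    rw [← h2]
    exact integral_map measurable_snd.aemeasurable measurable_id.aestronglyMeasurable
  set F : ℝ × ℝ → ℝ := fun w => w.1 - a with hF'
  set G : ℝ × ℝ → ℝ := fun w => w.2 - b with hG'
  have hF : MemLp F 2 π := hf.sub (memLp_const a)
  have hG : MemLp G 2 π := hg.sub (memLp_const b)
  set A : ℝ := ∫ w, F w ^ 2 ∂π with hA'
  set B : ℝ := ∫ w, G w ^ 2 ∂π with hB'
  have hA0 : 0 ≤ A := integral_nonneg fun w => sq_nonneg _
  have hB0 : 0 ≤ B := integral_nonneg fun w => sq_nonneg _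
  have hVf : variance id Q = A := by
    rw [hQ.variance_eq]
    have h3 : ((id : ℝ → ℝ) - fun _ => ∫ t, (id : ℝ → ℝ) t ∂Q) ^ 2
        = fun t : ℝ => (t - a) ^ 2 := by
      funext t
      simp only [Pi.pow_apply, Pi.sub_apply, id_eq]
      rw [show ∫ t : ℝ, t ∂Q = a from hEf]
    rw [h3, ← h1]
    exact integral_map measurable_fst.aemeasurable
      ((measurable_id.sub measurable_const).pow_const 2).aestronglyMeasurable
  have hVg : variance id ν' = B := by
    rw [hν.variance_eq]
    have h3 : ((id : ℝ → ℝ) - fun _ => ∫ t, (id : ℝ → ℝ) t ∂ν') ^ 2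
        = fun t : ℝ => (t - b) ^ 2 := by
      funext t
      simp only [Pi.pow_apply, Pi.sub_apply, id_eq]
      rw [show ∫ t : ℝ, t ∂ν' = b from hEg]
    rw [h3, ← h2]
    exact integral_map measurable_snd.aemeasurable
      ((measurable_id.sub measurable_const).pow_const 2).aestronglyMeasurable
  -- expectation of h and h²
  have hEh : ∫ w : ℝ × ℝ, (w.1 - w.2) ∂π = a - b :=
    integral_sub (hf.integrable one_le_two) (hg.integrable one_le_two)
  have hVarh := variance_eq_sub hh
  have hVarh' : variance (fun w : ℝ × ℝ => w.1 - w.2) π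
      = (∫ w : ℝ × ℝ, (w.1 - w.2) ^ 2 ∂π) - (a - b) ^ 2 := by
    rw [hVarh, hEh]
    simp only [Pi.pow_apply]
  constructor
  · apply ENNReal.ofReal_le_ofReal
    rw [hEf, hEg]
    have := variance_nonneg (fun w : ℝ × ℝ => w.1 - w.2) π
    linarith [hVarh' ▸ this]
  · apply ENNReal.ofReal_le_ofReal
    rw [hVf, hVg]
    -- Cauchy-Schwarz
    have hFGint : Integrable (fun w => F w * G w) π := by
      refine Integrable.mono' (hF.integrable_sq.add hG.integrable_sq)
        ((hF.aestronglyMeasurable.mul hG.aestronglyMeasurable)) ?_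
      filter_upwards with w
      simp only [Pi.add_apply, Real.norm_eq_abs]
      refine abs_le.mpr ⟨?_, ?_⟩ <;>
        nlinarith [sq_nonneg (F w + G w), sq_nonneg (F w - G w), sq_nonneg (F w), sq_nonneg (G w)]
    have hCS : ∫ w, F w * G w ∂π ≤ Real.sqrt A * Real.sqrt B := by
      have h2ne : ENNReal.ofReal (2:ℝ) = 2 := by norm_num
      have key := integral_mul_norm_le_Lp_mul_Lq (μ := π)
        (Real.holderConjugate_iff.mpr ⟨one_lt_two, by norm_num⟩)
        (h2ne ▸ hF) (h2ne ▸ hG)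
      have e1 : ∫ w, ‖F w‖ ^ (2:ℝ) ∂π = A := by
        rw [hA']; apply integral_congr_ae; filter_upwards with w
        rw [show ((2:ℝ)) = ((2:ℕ):ℝ) by norm_num, Real.rpow_natCast, Real.norm_eq_abs, sq_abs]
      have e2 : ∫ w, ‖G w‖ ^ (2:ℝ) ∂π = B := by
        rw [hB']; apply integral_congr_ae; filter_upwards with w
        rw [show ((2:ℝ)) = ((2:ℕ):ℝ) by norm_num, Real.rpow_natCast, Real.norm_eq_abs, sq_abs]
      rw [e1, e2] at key
      calc ∫ w, F w * G w ∂π ≤ ∫ w, ‖F w‖ * ‖G w‖ ∂π := by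
            apply integral_mono hFGint
            · simpa [Real.norm_eq_abs, abs_mul] using hFGint.abs
            · intro w
              simp only [Real.norm_eq_abs, ← abs_mul]
              exact le_abs_self _
          _ ≤ A ^ (1/(2:ℝ)) * B ^ (1/(2:ℝ)) := key
          _ = Real.sqrt A * Real.sqrt B := by rw [Real.sqrt_eq_rpow, Real.sqrt_eq_rpow]
    -- variance of difference expansion
    have hexp : variance (fun w : ℝ × ℝ => w.1 - w.2) π = A - 2 * ∫ w, F w * G w ∂π + B := by
      rw [hh.variance_eq]
      have h3 : ((fun w : ℝ × ℝ => w.1 - w.2) - fun _ => ∫ w : ℝ × ℝ, (w.1 - w.2) ∂π) ^ 2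
          = fun w : ℝ × ℝ => F w ^ 2 - 2 * (F w * G w) + G w ^ 2 := by
        funext w
        simp only [Pi.pow_apply, Pi.sub_apply, hEh, hF', hG']
        ring
      rw [h3]
      simp only []
      have i2 : Integrable (fun x => 2 * (F x * G x)) π := hFGint.const_mul 2
      have i1 : Integrable (fun x => F x ^ 2 - 2 * (F x * G x)) π := hF.integrable_sq.sub i2
      rw [integral_add i1 hG.integrable_sq, integral_sub hF.integrable_sq i2,
        integral_const_mul, ← hA', ← hB']
    have hVarle : variance (fun w : ℝ × ℝ => w.1 - w.2) π ≤ ∫ w : ℝ × ℝ, (w.1 - w.2) ^ 2 ∂π := by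
      rw [hVarh']; nlinarith [sq_nonneg (a - b)]
    have hsq : Real.sqrt A ^ 2 = A := Real.sq_sqrt hA0
    have hsq' : Real.sqrt B ^ 2 = B := Real.sq_sqrt hB0
    nlinarith [hexp ▸ hVarle, hCS]

end coupling

section ball
open ProbabilityTheory

lemma ball_bounds {N : ℕ} (hN : 0 < N) (y : Fin N → ℝ) {δ : ℝ} (hδ : 0 ≤ δ)
    {Q : Measure ℝ} (hQ : Q ∈ realWassersteinBall 2 Set.univ (empMeasure y) δ) :
    |(∫ t, t ∂Q) - ∫ t, t ∂(empMeasure y)| ≤ δ ∧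
    |Real.sqrt (variance id Q) - Real.sqrt (variance id (empMeasure y))| ≤ δ := by
  obtain ⟨hprob, -, hmom, hw⟩ := hQ
  haveI := hprob
  haveI := empMeasure_prob y hN
  have hQℒ : MemLp (id : ℝ → ℝ) 2 Q := memLp_of_moment hmom
  have hνℒ : MemLp (id : ℝ → ℝ) 2 (empMeasure y) := memLp_empMeasure y hN
  unfold wassersteinDist at hw
  set I := ⨅ (π : Measure (ℝ × ℝ)) (_ : IsProbabilityMeasure π ∧
      π.map Prod.fst = Q ∧ π.map Prod.snd = empMeasure y),
      transportCost 2 (fun a b => |a - b|) π with hI'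
  have hIle : I ≤ ENNReal.ofReal (δ ^ 2) := by
    have h1 : I = (I ^ ((1:ℝ)/2)) ^ (2:ℝ) := by
      rw [← ENNReal.rpow_mul]
      norm_num
    calc I = (I ^ ((1:ℝ)/2)) ^ (2:ℝ) := h1
      _ ≤ (ENNReal.ofReal δ) ^ (2:ℝ) := ENNReal.rpow_le_rpow hw (by norm_num)
      _ = ENNReal.ofReal (δ ^ 2) := by
          rw [ENNReal.ofReal_rpow_of_nonneg hδ (by norm_num)]
          norm_num
  have key : ∀ c : ℝ,
      ENNReal.ofReal (c ^ 2) ≤ I → |c| ≤ δ := by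
    intro c hc
    have h2 : (c:ℝ) ^ 2 ≤ δ ^ 2 :=
      (ENNReal.ofReal_le_ofReal_iff (by positivity)).1 (hc.trans hIle)
    have h3 := Real.sqrt_le_sqrt h2
    rwa [Real.sqrt_sq_eq_abs, Real.sqrt_sq hδ] at h3
  constructor
  · refine key _ (le_iInf fun π => le_iInf fun hπ => ?_)
    haveI := hπ.1
    exact (coupling_bounds hQℒ hνℒ hπ.1 hπ.2.1 hπ.2.2).1
  · refine key _ (le_iInf fun π => le_iInf fun hπ => ?_)
    haveI := hπ.1
    exact (coupling_bounds hQℒ hνℒ hπ.1 hπ.2.1 hπ.2.2).2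

lemma wdist_le_of_emp_coupling {N : ℕ} (hN : 0 < N) (z : Fin N → ℝ × ℝ) {δ : ℝ} (hδ : 0 ≤ δ)
    (hc : (1/(N:ℝ)) * ∑ i, ((z i).1 - (z i).2) ^ 2 ≤ δ ^ 2) :
    wassersteinDist 2 (fun a b => |a - b|) (empMeasure (fun i => (z i).1))
      (empMeasure (fun i => (z i).2)) ≤ ENNReal.ofReal δ := by
  unfold wassersteinDist
  have hπ : IsProbabilityMeasure (empMeasure z) := empMeasure_prob z hN
  have h1 : (empMeasure z).map Prod.fst = empMeasure (fun i => (z i).1) :=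
    empMeasure_map measurable_fst z
  have h2 : (empMeasure z).map Prod.snd = empMeasure (fun i => (z i).2) :=
    empMeasure_map measurable_snd z
  have hcost : transportCost 2 (fun a b => |a - b|) (empMeasure z)
      ≤ ENNReal.ofReal (δ ^ 2) := by
    rw [cost_eq, lintegral_empMeasure]
    have e1 : (N : ℝ≥0∞)⁻¹ * ∑ i, ENNReal.ofReal (((z i).1 - (z i).2) ^ 2)
        = ENNReal.ofReal ((1/(N:ℝ)) * ∑ i, ((z i).1 - (z i).2) ^ 2) := by
      rw [ENNReal.ofReal_mul (by positivity),
        ENNReal.ofReal_sum_of_nonneg (fun i _ => sq_nonneg _)]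
      congr 1
      rw [one_div, ENNReal.ofReal_inv_of_pos (by exact_mod_cast hN), ENNReal.ofReal_natCast]
    rw [e1]
    exact ENNReal.ofReal_le_ofReal hc
  calc (⨅ (π : Measure (ℝ × ℝ)) (_ : IsProbabilityMeasure π ∧
          π.map Prod.fst = empMeasure (fun i => (z i).1) ∧
          π.map Prod.snd = empMeasure (fun i => (z i).2)),
        transportCost 2 (fun a b => |a - b|) π) ^ ((1:ℝ)/2)
      ≤ (transportCost 2 (fun a b => |a - b|) (empMeasure z)) ^ ((1:ℝ)/2) := by
        refine ENNReal.rpow_le_rpow ?_ (by norm_num)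
        exact iInf₂_le (empMeasure z) ⟨hπ, h1, h2⟩
    _ ≤ (ENNReal.ofReal (δ ^ 2)) ^ ((1:ℝ)/2) := ENNReal.rpow_le_rpow hcost (by norm_num)
    _ = ENNReal.ofReal δ := by
        rw [ENNReal.ofReal_rpow_of_nonneg (sq_nonneg δ) (by norm_num)]
        congr 1
        rw [← Real.rpow_natCast δ 2, ← Real.rpow_mul hδ]
        norm_num

end ball

section supinf
open ProbabilityTheory

lemma emp_mem_ball {N : ℕ} (hN : 0 < N) (y w : Fin N → ℝ) {δ : ℝ} (hδ : 0 ≤ δ)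
    (hc : (1/(N:ℝ)) * ∑ i, (w i - y i) ^ 2 ≤ δ ^ 2) :
    empMeasure w ∈ realWassersteinBall 2 Set.univ (empMeasure y) δ := by
  refine ⟨empMeasure_prob w hN, by simp, moment_empMeasure w hN, ?_⟩
  exact wdist_le_of_emp_coupling hN (fun i => (w i, y i)) hδ hc

lemma sInf_mean {N : ℕ} (hN : 0 < N) (y : Fin N → ℝ) {δ : ℝ} (hδ : 0 ≤ δ) :
    sInf ((fun Q : Measure ℝ => ((∫ t, t ∂Q : ℝ) : EReal)) ''
        realWassersteinBall 2 Set.univ (empMeasure y) δ)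
      = (((1/(N:ℝ)) * ∑ i, y i - δ : ℝ) : EReal) := by
  have hN' : (N:ℝ) ≠ 0 := by positivity
  apply le_antisymm
  · apply sInf_le
    refine ⟨empMeasure (fun i => y i - δ), emp_mem_ball hN y _ hδ ?_, ?_⟩
    · have e : ∀ i : Fin N, (y i - δ - y i) ^ 2 = δ ^ 2 := fun i => by ring
      simp_rw [e, Finset.sum_const, Finset.card_univ, Fintype.card_fin, nsmul_eq_mul]
      field_simp
      exact le_rfl
    · simp only []
      rw [mean_empMeasure, EReal.coe_eq_coe_iff, Finset.sum_sub_distrib, Finset.sum_const,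
        Finset.card_univ, Fintype.card_fin, nsmul_eq_mul]
      field_simp
  · apply le_sInf
    rintro v ⟨Q, hQ, rfl⟩
    have h := (ball_bounds hN y hδ hQ).1
    rw [mean_empMeasure] at h
    rw [EReal.coe_le_coe_iff]
    linarith [(abs_le.1 h).1]

lemma sSup_var {N : ℕ} (hN : 0 < N) (y : Fin N → ℝ) {δ : ℝ} (hδ : 0 ≤ δ) :
    sSup ((fun Q : Measure ℝ => ((variance id Q : ℝ) : EReal)) ''
        realWassersteinBall 2 Set.univ (empMeasure y) δ)
      = ((((Real.sqrt ((1/(N:ℝ)) * ∑ i, (y i - (1/(N:ℝ)) * ∑ i', y i') ^ 2) + δ) ^ 2 : ℝ))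
          : EReal) := by
  have hN' : (N:ℝ) ≠ 0 := by positivity
  set M : ℝ := (1/(N:ℝ)) * ∑ i, y i with hM'
  set V : ℝ := (1/(N:ℝ)) * ∑ i, (y i - M) ^ 2 with hV'
  have hV0 : 0 ≤ V := by
    rw [hV']; positivity
  set σ : ℝ := Real.sqrt V with hσ'
  have hσ0 : 0 ≤ σ := Real.sqrt_nonneg V
  have hσ2 : σ ^ 2 = V := Real.sq_sqrt hV0
  apply le_antisymm
  · apply sSup_le
    rintro v ⟨Q, hQ, rfl⟩
    have h := (ball_bounds hN y hδ hQ).2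
    rw [variance_empMeasure y hN] at h
    rw [EReal.coe_le_coe_iff]
    have h1 : Real.sqrt (variance id Q) ≤ σ + δ := by linarith [(abs_le.1 h).2]
    calc variance id Q = (Real.sqrt (variance id Q)) ^ 2 :=
          (Real.sq_sqrt (variance_nonneg _ _)).symm
      _ ≤ (σ + δ) ^ 2 := pow_le_pow_left₀ (Real.sqrt_nonneg _) h1 2
  · by_cases hV : V = 0
    · have hσz : σ = 0 := by rw [hσ', hV, Real.sqrt_zero]
      have hy : ∀ i, y i = M := by
        intro i
        have hsum : ∑ i, (y i - M) ^ 2 = 0 := by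
          have : (1/(N:ℝ)) * ∑ i, (y i - M) ^ 2 = 0 := by rw [← hV', hV]
          field_simp at this
          simpa using this
        have h0 := (Finset.sum_eq_zero_iff_of_nonneg
          (fun i _ => sq_nonneg (y i - M))).1 hsum i (Finset.mem_univ i)
        have := pow_eq_zero_iff (n := 2) (by norm_num) |>.1 h0
        linarith [this]
      have hemp : empMeasure y = empMeasure (fun _ : Fin 2 => M) := by
        rw [show y = fun _ : Fin N => M from funext hy, empMeasure_const hN M,
          empMeasure_const (by norm_num : (0:ℕ) < 2) M]
      apply le_sSup
      refine ⟨empMeasure ![M + δ, M - δ], ?_, ?_⟩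
      · rw [hemp]
        refine emp_mem_ball (by norm_num) (fun _ : Fin 2 => M) ![M + δ, M - δ] hδ ?_
        rw [Fin.sum_univ_two]
        simp only [Matrix.cons_val_zero, Matrix.cons_val_one, Matrix.head_cons]
        apply le_of_eq
        push_cast
        ring
      · simp only []
        rw [variance_empMeasure ![M + δ, M - δ] (by norm_num : (0:ℕ) < 2),
          EReal.coe_eq_coe_iff, hσz]
        rw [Fin.sum_univ_two, Fin.sum_univ_two]
        simp only [Matrix.cons_val_zero, Matrix.cons_val_one, Matrix.head_cons]
        push_cast
        ring
    · have hVpos : 0 < V := lt_of_le_of_ne hV0 (Ne.symm hV)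
      have hσpos : 0 < σ := Real.sqrt_pos.2 hVpos
      set c : ℝ := 1 + δ/σ with hc'
      have hsum : ∑ i, y i = N * M := by
        rw [hM']; field_simp
      have hmean : (1/(N:ℝ)) * ∑ i, (M + c * (y i - M)) = M := by
        rw [Finset.sum_add_distrib, Finset.sum_const, Finset.card_univ, Fintype.card_fin,
          nsmul_eq_mul, ← Finset.mul_sum, Finset.sum_sub_distrib, Finset.sum_const,
          Finset.card_univ, Fintype.card_fin, nsmul_eq_mul, hsum]
        field_simp
        ring
      apply le_sSup
      refine ⟨empMeasure (fun i => M + c * (y i - M)), emp_mem_ball hN y _ hδ ?_, ?_⟩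
      · have e : ∀ i : Fin N, (M + c * (y i - M) - y i) ^ 2 = (c - 1) ^ 2 * (y i - M) ^ 2 :=
          fun i => by ring
        simp_rw [e]
        rw [← Finset.mul_sum]
        have e2 : (1/(N:ℝ)) * ((c-1)^2 * ∑ i, (y i - M)^2) = (c-1)^2 * V := by
          rw [hV']; ring
        rw [e2]
        apply le_of_eq
        rw [hc', ← hσ2]
        field_simp
        ring
      · simp only []
        rw [variance_empMeasure _ hN, hmean]
        have e3 : ∀ i : Fin N, (M + c * (y i - M) - M) ^ 2 = c^2 * (y i - M)^2 :=
          fun i => by ring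
        simp_rw [e3]
        rw [← Finset.mul_sum]
        have e4 : (1/(N:ℝ)) * (c^2 * ∑ i, (y i - M)^2) = c^2 * V := by
          rw [hV']; ring
        rw [e4, EReal.coe_eq_coe_iff, hc', ← hσ2]
        field_simp

end supinf

section final
open ProbabilityTheory
open scoped RealInnerProductSpace

lemma euclid_inner_sum {m : ℕ} (x v : EuclideanSpace ℝ (Fin m)) : ⟪x, v⟫ = ∑ j, x j * v j := by
  simp [PiLp.inner_apply, RCLike.inner_apply, conj_trivial]
  exact Finset.sum_congr rfl fun _ _ => mul_comm _ _

lemma Mid {m N : ℕ} (ξh : Fin N → EuclideanSpace ℝ (Fin m)) (x : EuclideanSpace ℝ (Fin m)) :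
    (1/(N:ℝ)) * ∑ i, ∑ j, x j * ξh i j = ∑ j, sampleMean ξh j * x j := by
  unfold sampleMean
  rw [Finset.sum_comm, Finset.mul_sum]
  refine Finset.sum_congr rfl fun j _ => ?_
  rw [← Finset.mul_sum]
  ring

lemma Vid {m N : ℕ} (ξh : Fin N → EuclideanSpace ℝ (Fin m)) (x : EuclideanSpace ℝ (Fin m)) :
    (1/(N:ℝ)) * ∑ i, ((∑ j, x j * ξh i j) - ∑ j, sampleMean ξh j * x j) ^ 2
      = ∑ j, ∑ k, x j * sampleCov ξh j k * x k := by
  have key : ∀ i, (∑ j, x j * ξh i j) - (∑ j, sampleMean ξh j * x j)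
      = ∑ j, x j * (ξh i j - sampleMean ξh j) := by
    intro i
    rw [← Finset.sum_sub_distrib]
    exact Finset.sum_congr rfl fun j _ => by ring
  simp_rw [key]
  have sqexp : ∀ i, (∑ j, x j * (ξh i j - sampleMean ξh j)) ^ 2
      = ∑ j, ∑ k, x j * (ξh i j - sampleMean ξh j) * (x k * (ξh i k - sampleMean ξh k)) := by
    intro i; rw [sq, Finset.sum_mul_sum]
  simp_rw [sqexp]
  unfold sampleCov
  simp_rw [Finset.mul_sum]
  rw [Finset.sum_comm]
  refine Finset.sum_congr rfl fun j _ => ?_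
  rw [Finset.sum_comm]
  refine Finset.sum_congr rfl fun k _ => ?_
  rw [Finset.sum_mul]
  exact Finset.sum_congr rfl fun i _ => by ring

lemma per_x {m N : ℕ} (hN : 0 < N) (ξh : Fin N → EuclideanSpace ℝ (Fin m))
    (ε : ℝ) (hε : 0 < ε) (x : EuclideanSpace ℝ (Fin m)) :
    (sInf ((fun Q : Measure ℝ => ((∫ t, t ∂Q : ℝ) : EReal)) ''
        realWassersteinBall 2 Set.univ (empMeasure fun i => ⟪x, ξh i⟫) (ε * ‖x‖))
      = (((∑ j, sampleMean ξh j * x j) - ε * ‖x‖ : ℝ) : EReal)) ∧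
    (sSup ((fun Q : Measure ℝ => ((variance id Q : ℝ) : EReal)) ''
        realWassersteinBall 2 Set.univ (empMeasure fun i => ⟪x, ξh i⟫) (ε * ‖x‖))
      = (((Real.sqrt (∑ j, ∑ k, x j * sampleCov ξh j k * x k) + ε * ‖x‖) ^ 2 : ℝ) : EReal)) := by
  have hδ : 0 ≤ ε * ‖x‖ := by positivity
  constructor
  · rw [sInf_mean hN _ hδ, EReal.coe_eq_coe_iff]
    simp only [euclid_inner_sum]
    rw [Mid ξh x]
  · rw [sSup_var hN _ hδ, EReal.coe_eq_coe_iff]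
    simp only [euclid_inner_sum]
    rw [Mid ξh x, Vid ξh x]

end final


/-- The decision-dependent Wasserstein DRO Markowitz mean-variance portfolio
problem and its second-order-cone reformulation. -/
theorem statement12 {m N : ℕ} (hN : 0 < N)
    (ξh : Fin N → EuclideanSpace ℝ (Fin m))
    (μ : ℝ) (ε : ℝ) (hε : 0 < ε) :
    sInf {v : EReal | ∃ x : EuclideanSpace ℝ (Fin m),
        (∑ i, x i) = 1 ∧ (∀ i, 0 ≤ x i) ∧
        ((μ : EReal) ≤ sInf ((fun Q : Measure ℝ => ((∫ t, t ∂Q : ℝ) : EReal)) ''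
          realWassersteinBall 2 Set.univ
            (empMeasure fun i => ⟪x, ξh i⟫) (ε * ‖x‖))) ∧
        v = sSup ((fun Q : Measure ℝ => ((ProbabilityTheory.variance id Q : ℝ) : EReal)) ''
          realWassersteinBall 2 Set.univ
            (empMeasure fun i => ⟪x, ξh i⟫) (ε * ‖x‖))} =
    sInf {v : EReal | ∃ x : EuclideanSpace ℝ (Fin m),
        (∑ i, x i) = 1 ∧ (∀ i, 0 ≤ x i) ∧
        (μ ≤ (∑ j, sampleMean ξh j * x j) - ε * ‖x‖) ∧
        v = (((Real.sqrt (∑ j, ∑ k, x j * sampleCov ξh j k * x k) + ε * ‖x‖) ^ 2 : ℝ) :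
          EReal)} := by
  have hset : ∀ v : EReal,
      (∃ x : EuclideanSpace ℝ (Fin m),
        (∑ i, x i) = 1 ∧ (∀ i, 0 ≤ x i) ∧
        ((μ : EReal) ≤ sInf ((fun Q : Measure ℝ => ((∫ t, t ∂Q : ℝ) : EReal)) ''
          realWassersteinBall 2 Set.univ
            (empMeasure fun i => ⟪x, ξh i⟫) (ε * ‖x‖))) ∧
        v = sSup ((fun Q : Measure ℝ => ((ProbabilityTheory.variance id Q : ℝ) : EReal)) ''
          realWassersteinBall 2 Set.univ
            (empMeasure fun i => ⟪x, ξh i⟫) (ε * ‖x‖))) ↔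
      (∃ x : EuclideanSpace ℝ (Fin m),
        (∑ i, x i) = 1 ∧ (∀ i, 0 ≤ x i) ∧
        (μ ≤ (∑ j, sampleMean ξh j * x j) - ε * ‖x‖) ∧
        v = (((Real.sqrt (∑ j, ∑ k, x j * sampleCov ξh j k * x k) + ε * ‖x‖) ^ 2 : ℝ) :
          EReal)) := by
    intro v
    constructor
    · rintro ⟨x, h1, h2, h3, h4⟩
      refine ⟨x, h1, h2, ?_, ?_⟩
      · rw [(per_x hN ξh ε hε x).1] at h3
        exact EReal.coe_le_coe_iff.1 h3
      · rw [h4, (per_x hN ξh ε hε x).2]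
    · rintro ⟨x, h1, h2, h3, h4⟩
      refine ⟨x, h1, h2, ?_, ?_⟩
      · rw [(per_x hN ξh ε hε x).1]
        exact EReal.coe_le_coe_iff.2 h3
      · rw [h4, (per_x hN ξh ε hε x).2]
  congr 1
  ext v
  simp only [Set.mem_setOf_eq]
  exact hset v
end

section
/- Let I ⊆ ℝ be a nonempty interval, let ζ₁,…,ζ_N ∈ I, let ν = (1/N) Σ_{i=1}^N δ_{ζᵢ}, and let ε > 0. Then inf{ E_{ζ∼Q}[ζ] : Q a probability measure supported on the closure of I with finite first moment and W₁(Q, ν) ≤ ε } = max{ (1/N) Σ_{i=1}^N ζ_i − ε, inf I } (with the convention that the maximum equals (1/N) Σᵢ ζᵢ − ε when inf I = −∞). -/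
open MeasureTheory
open scoped ENNReal

/- ## Auxiliary lemmas -/

lemma aux_integrable_dirac {f : ℝ → ℝ} (hf : Measurable f) (a : ℝ) :
    Integrable f (Measure.dirac a) :=
  ⟨hf.aestronglyMeasurable, by simp [HasFiniteIntegral, lintegral_dirac]⟩

lemma aux_map_finset_sum {α β ι : Type*} [MeasurableSpace α] [MeasurableSpace β] {f : α → β}
    (hf : Measurable f) (s : Finset ι) (μ : ι → Measure α) :
    Measure.map f (∑ i ∈ s, μ i) = ∑ i ∈ s, Measure.map f (μ i) := by
  induction s using Finset.cons_induction with
  | empty => simp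
  | cons i s hi ih => rw [Finset.sum_cons, Finset.sum_cons, Measure.map_add _ _ hf, ih]

lemma emp_mean {N : ℕ} (ζ : Fin N → ℝ) :
    ∫ t, t ∂(empMeasure ζ) = (1/(N:ℝ)) * ∑ i, ζ i := by
  rw [empMeasure, integral_smul_measure,
    integral_finset_sum_measure (f := fun t : ℝ => t)
      (fun i _ => aux_integrable_dirac measurable_id _)]
  simp [integral_dirac]

lemma emp_moment {N : ℕ} (hN : 0 < N) (ζ : Fin N → ℝ) :
    (∫⁻ x, ENNReal.ofReal |x| ∂(empMeasure ζ)) < ⊤ := by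
  rw [empMeasure, lintegral_smul_measure, lintegral_finset_sum_measure]
  simp only [lintegral_dirac]
  exact ENNReal.mul_lt_top (by simpa using hN) (ENNReal.sum_lt_top.2 fun i _ => by simp)

lemma wd_one (Q ν : Measure ℝ) :
    wassersteinDist 1 (fun a b => |a - b|) Q ν
      = ⨅ (π : Measure (ℝ × ℝ)) (_ : IsProbabilityMeasure π ∧
          π.map Prod.fst = Q ∧ π.map Prod.snd = ν),
          ∫⁻ w, ENNReal.ofReal |w.1 - w.2| ∂π := by
  rw [wassersteinDist]
  norm_num [transportCost, Real.rpow_one]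

section Construction

variable {N : ℕ} (ζ : Fin N → ℝ) (a t : ℝ)

noncomputable def piC : Measure (ℝ × ℝ) :=
  (N : ℝ≥0∞)⁻¹ • ∑ i, (ENNReal.ofReal (1-t) • Measure.dirac ((ζ i, ζ i) : ℝ × ℝ)
    + ENNReal.ofReal t • Measure.dirac ((a, ζ i) : ℝ × ℝ))

noncomputable def QC : Measure ℝ :=
  (N : ℝ≥0∞)⁻¹ • ∑ i, (ENNReal.ofReal (1-t) • Measure.dirac (ζ i)
    + ENNReal.ofReal t • Measure.dirac a)

lemma piC_fst : (piC ζ a t).map Prod.fst = QC ζ a t := by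
  rw [piC, QC, Measure.map_smul, aux_map_finset_sum measurable_fst]
  congr 1
  refine Finset.sum_congr rfl fun i _ => ?_
  rw [Measure.map_add _ _ measurable_fst, Measure.map_smul, Measure.map_smul,
    Measure.map_dirac' measurable_fst, Measure.map_dirac' measurable_fst]

lemma piC_snd (ht0 : 0 ≤ t) (ht1 : t ≤ 1) :
    (piC ζ a t).map Prod.snd = empMeasure ζ := by
  rw [piC, empMeasure, Measure.map_smul, aux_map_finset_sum measurable_snd]
  congr 1
  refine Finset.sum_congr rfl fun i _ => ?_
  rw [Measure.map_add _ _ measurable_snd, Measure.map_smul, Measure.map_smul,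
    Measure.map_dirac' measurable_snd, Measure.map_dirac' measurable_snd,
    ← add_smul, ← ENNReal.ofReal_add (by linarith) ht0]
  simp

lemma piC_prob (hN : 0 < N) (ht0 : 0 ≤ t) (ht1 : t ≤ 1) :
    IsProbabilityMeasure (piC ζ a t) := by
  constructor
  rw [piC]
  simp only [Measure.smul_apply, Measure.coe_finset_sum, Finset.sum_apply, Measure.add_apply,
    Measure.smul_apply, smul_eq_mul, measure_univ, mul_one]
  rw [← ENNReal.ofReal_add (by linarith) ht0]
  simp only [sub_add_cancel, ENNReal.ofReal_one, Finset.sum_const, Finset.card_univ,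
    Fintype.card_fin, nsmul_eq_mul, mul_one]
  exact ENNReal.inv_mul_cancel (by exact_mod_cast hN.ne') (by simp)

lemma piC_cost (hN : 0 < N) (ht0 : 0 ≤ t) (ha : ∀ i, a ≤ ζ i) :
    transportCost 1 (fun a b => |a - b|) (piC ζ a t)
      = ENNReal.ofReal (t * ((1/(N:ℝ)) * ∑ i, ζ i - a)) := by
  have hmeas : Measurable fun w : ℝ × ℝ => ENNReal.ofReal (|w.1 - w.2| ^ (1:ℝ)) :=
    (measurable_fst.sub measurable_snd).abs.pow_const _ |>.ennreal_ofReal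
  rw [transportCost, piC, lintegral_smul_measure,
    lintegral_finset_sum_measure]
  simp only [lintegral_add_measure, lintegral_smul_measure, lintegral_dirac' _ hmeas]
  simp only [sub_self, abs_zero, Real.rpow_one, ENNReal.ofReal_zero, mul_zero, zero_add]
  have habs : ∀ i, |a - ζ i| = ζ i - a := fun i => by
    rw [abs_sub_comm]; exact abs_of_nonneg (by linarith [ha i])
  simp only [habs, smul_eq_mul, mul_zero, zero_add]
  rw [← Finset.mul_sum, ← ENNReal.ofReal_sum_of_nonneg (fun i _ => by linarith [ha i])]
  rw [← ENNReal.ofReal_mul ht0]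
  have hNr : (0:ℝ) < N := by exact_mod_cast hN
  rw [show ((N:ℝ≥0∞))⁻¹ = ENNReal.ofReal ((N:ℝ)⁻¹) by
    rw [ENNReal.ofReal_inv_of_pos hNr, ENNReal.ofReal_natCast]]
  rw [← ENNReal.ofReal_mul (by positivity)]
  congr 1
  rw [Finset.sum_sub_distrib]
  simp only [Finset.sum_const, Finset.card_univ, Fintype.card_fin, smul_eq_mul, nsmul_eq_mul]
  field_simp

lemma QC_prob (hN : 0 < N) (ht0 : 0 ≤ t) (ht1 : t ≤ 1) :
    IsProbabilityMeasure (QC ζ a t) := by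
  constructor
  rw [QC]
  simp only [Measure.smul_apply, Measure.coe_finset_sum, Finset.sum_apply, Measure.add_apply,
    Measure.smul_apply, smul_eq_mul, measure_univ, mul_one]
  rw [← ENNReal.ofReal_add (by linarith) ht0]
  simp only [sub_add_cancel, ENNReal.ofReal_one, Finset.sum_const, Finset.card_univ,
    Fintype.card_fin, nsmul_eq_mul, mul_one]
  exact ENNReal.inv_mul_cancel (by exact_mod_cast hN.ne') (by simp)

lemma QC_support {S : Set ℝ} (hζ : ∀ i, ζ i ∈ S) (ha : a ∈ S) :
    QC ζ a t Sᶜ = 0 := by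
  rw [QC]
  simp only [Measure.smul_apply, Measure.coe_finset_sum, Finset.sum_apply, Measure.add_apply,
    Measure.smul_apply, smul_eq_mul]
  have h1 : ∀ i : Fin N, Measure.dirac (ζ i) Sᶜ = 0 := fun i => by
    rw [Measure.dirac_apply]; simp [Set.indicator_of_notMem, hζ i]
  have h2 : Measure.dirac a Sᶜ = 0 := by
    rw [Measure.dirac_apply]; simp [Set.indicator_of_notMem, ha]
  simp [h1, h2]

lemma QC_moment (hN : 0 < N) :
    (∫⁻ x, ENNReal.ofReal (|x| ^ (1:ℝ)) ∂(QC ζ a t)) < ⊤ := by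
  rw [QC, lintegral_smul_measure, lintegral_finset_sum_measure]
  simp only [lintegral_add_measure, lintegral_smul_measure, lintegral_dirac]
  refine ENNReal.mul_lt_top (by simpa using hN) ?_
  refine ENNReal.sum_lt_top.2 ?_
  intro i _
  exact ENNReal.add_lt_top.2 ⟨ENNReal.mul_lt_top (by simp) (by simp),
    ENNReal.mul_lt_top (by simp) (by simp)⟩

lemma QC_mean (hN : 0 < N) (ht0 : 0 ≤ t) (ht1 : t ≤ 1) :
    ∫ x, x ∂(QC ζ a t) = (1-t) * ((1/(N:ℝ)) * ∑ i, ζ i) + t * a := by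
  have hint : ∀ (b : ℝ) (c : ℝ≥0∞), c ≠ ⊤ →
      Integrable (fun x : ℝ => x) (c • Measure.dirac b) := fun b c hc =>
    (aux_integrable_dirac measurable_id b).smul_measure hc
  rw [QC, integral_smul_measure, integral_finset_sum_measure
    (f := fun x : ℝ => x)
    (fun i _ => ((hint _ _ (by simp)).add_measure (hint _ _ (by simp))))]
  have h1 : ∀ i : Fin N, ∫ x, x ∂(ENNReal.ofReal (1-t) • Measure.dirac (ζ i)
      + ENNReal.ofReal t • Measure.dirac a) = (1-t) * ζ i + t * a := by
    intro i
    rw [integral_add_measure (hint _ _ (by simp)) (hint _ _ (by simp)),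
      integral_smul_measure, integral_smul_measure, integral_dirac, integral_dirac]
    simp [ENNReal.toReal_ofReal ht0, ENNReal.toReal_ofReal (by linarith : (0:ℝ) ≤ 1 - t)]
  simp only [h1]
  rw [Finset.sum_add_distrib]
  simp only [Finset.sum_const, Finset.card_univ, Fintype.card_fin, nsmul_eq_mul, smul_eq_mul,
    ENNReal.toReal_inv, ENNReal.toReal_natCast, ← Finset.mul_sum]
  have hNr : (0:ℝ) < N := by exact_mod_cast hN
  field_simp

/-- The constructed measure lies in the Wasserstein ball. -/
lemma QC_mem {I : Set ℝ} (hN : 0 < N) (hζI : ∀ i, ζ i ∈ I) (ha : a ∈ closure I)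
    (ha_le : ∀ i, a ≤ ζ i) (ht0 : 0 ≤ t) (ht1 : t ≤ 1) {ε : ℝ}
    (hcost : t * ((1/(N:ℝ)) * ∑ i, ζ i - a) ≤ ε) :
    QC ζ a t ∈ realWassersteinBall 1 (closure I) (empMeasure ζ) ε := by
  refine ⟨QC_prob ζ a t hN ht0 ht1, QC_support ζ a t (fun i => subset_closure (hζI i)) ha,
    QC_moment ζ a t hN, ?_⟩
  rw [wassersteinDist]
  norm_num
  refine le_trans (iInf₂_le (piC ζ a t)
    ⟨piC_prob ζ a t hN ht0 ht1, piC_fst ζ a t, piC_snd ζ a t ht0 ht1⟩) ?_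
  rw [piC_cost ζ a t hN ht0 ha_le]
  exact ENNReal.ofReal_le_ofReal hcost

end Construction

/- ## Lower bound lemmas -/

lemma aux_integrable_of_moment {Q : Measure ℝ}
    (h : (∫⁻ x, ENNReal.ofReal (|x| ^ (1:ℝ)) ∂Q) < ⊤) :
    Integrable (fun x : ℝ => x) Q :=
  ⟨measurable_id.aestronglyMeasurable, by
    simpa [HasFiniteIntegral, Real.enorm_eq_ofReal_abs, Real.rpow_one] using h⟩

lemma wasserstein_mean_lb {N : ℕ} (hN : 0 < N) (ζ : Fin N → ℝ) (Q : Measure ℝ)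
    [IsProbabilityMeasure Q]
    (hmom : (∫⁻ x, ENNReal.ofReal |x| ∂Q) < ⊤) {ε : ℝ} (hε : 0 < ε)
    (hW : (⨅ (π : Measure (ℝ × ℝ)) (_ : IsProbabilityMeasure π ∧
      π.map Prod.fst = Q ∧ π.map Prod.snd = empMeasure ζ),
        ∫⁻ w, ENNReal.ofReal |w.1 - w.2| ∂π) ≤ ENNReal.ofReal ε) :
    (1/(N:ℝ)) * ∑ i, ζ i - ε ≤ ∫ x, x ∂Q := by
  have key : ∀ η : ℝ, 0 < η → (1/(N:ℝ)) * ∑ i, ζ i - ε ≤ (∫ x, x ∂Q) + η := by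
    intro η hη
    have hlt : (⨅ (π : Measure (ℝ × ℝ)) (_ : IsProbabilityMeasure π ∧
        π.map Prod.fst = Q ∧ π.map Prod.snd = empMeasure ζ),
          ∫⁻ w, ENNReal.ofReal |w.1 - w.2| ∂π) < ENNReal.ofReal (ε + η) := by
      refine lt_of_le_of_lt hW ?_
      rw [ENNReal.ofReal_lt_ofReal_iff (by linarith)]
      linarith
    rw [iInf_lt_iff] at hlt
    obtain ⟨π, hlt⟩ := hlt
    rw [iInf_lt_iff] at hlt
    obtain ⟨⟨hπprob, hfst, hsnd⟩, hcost⟩ := hlt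
    haveI := hπprob
    have hQ1 : (∫⁻ w : ℝ × ℝ, ENNReal.ofReal |w.1| ∂π) < ⊤ := by
      have h := lintegral_map (μ := π) (f := fun x : ℝ => ENNReal.ofReal |x|)
        measurable_abs.ennreal_ofReal measurable_fst
      rw [hfst] at h
      rw [← h]; exact hmom
    have hQ2 : (∫⁻ w : ℝ × ℝ, ENNReal.ofReal |w.2| ∂π) < ⊤ := by
      have h := lintegral_map (μ := π) (f := fun x : ℝ => ENNReal.ofReal |x|)
        measurable_abs.ennreal_ofReal measurable_snd
      rw [hsnd] at h
      rw [← h]; exact emp_moment hN ζ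
    have hint1 : Integrable (fun w : ℝ × ℝ => w.1) π := by
      refine ⟨measurable_fst.aestronglyMeasurable, ?_⟩
      simp only [HasFiniteIntegral, Real.enorm_eq_ofReal_abs]
      exact hQ1
    have hint2 : Integrable (fun w : ℝ × ℝ => w.2) π := by
      refine ⟨measurable_snd.aestronglyMeasurable, ?_⟩
      simp only [HasFiniteIntegral, Real.enorm_eq_ofReal_abs]
      exact hQ2
    have h1 : ∫ w : ℝ × ℝ, (w.2 - w.1) ∂π ≤ ∫ w : ℝ × ℝ, |w.2 - w.1| ∂π :=
      le_trans (le_abs_self _) (by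
        simpa [abs_of_nonneg, Real.norm_eq_abs] using
          norm_integral_le_integral_norm (μ := π) (fun w : ℝ × ℝ => w.2 - w.1))
    have h2 : ∫ w : ℝ × ℝ, |w.2 - w.1| ∂π
        = (∫⁻ w : ℝ × ℝ, ENNReal.ofReal |w.1 - w.2| ∂π).toReal := by
      rw [integral_eq_lintegral_of_nonneg_ae (f := fun w : ℝ × ℝ => |w.2 - w.1|) (Filter.Eventually.of_forall fun w => abs_nonneg _)
        ((measurable_snd.sub measurable_fst).abs.aestronglyMeasurable)]
      congr 1
      refine lintegral_congr fun w => ?_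
      rw [abs_sub_comm]
    have h3 : (∫⁻ w : ℝ × ℝ, ENNReal.ofReal |w.1 - w.2| ∂π).toReal ≤ ε + η :=
      ENNReal.toReal_le_of_le_ofReal (by linarith) hcost.le
    have h4 : ∫ w : ℝ × ℝ, (w.2 - w.1) ∂π = (1/(N:ℝ)) * ∑ i, ζ i - ∫ x, x ∂Q := by
      rw [integral_sub hint2 hint1]
      have e2 : ∫ w : ℝ × ℝ, w.2 ∂π = ∫ x, x ∂(π.map Prod.snd) :=
        (integral_map measurable_snd.aemeasurable measurable_id.aestronglyMeasurable).symm
      have e1 : ∫ w : ℝ × ℝ, w.1 ∂π = ∫ x, x ∂(π.map Prod.fst) :=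
        (integral_map measurable_fst.aemeasurable measurable_id.aestronglyMeasurable).symm
      rw [e1, e2, hfst, hsnd, emp_mean]
    linarith
  linarith [le_of_forall_pos_le_add key]

lemma support_mean_lb {I : Set ℝ} {Q : Measure ℝ} [IsProbabilityMeasure Q]
    (hsupp : Q (closure I)ᶜ = 0) (hint : Integrable (fun x : ℝ => x) Q)
    {c : ℝ} (hc : ∀ x ∈ I, c ≤ x) : c ≤ ∫ x, x ∂Q := by
  have hsub : closure I ⊆ Set.Ici c := closure_minimal hc isClosed_Ici
  have hae : ∀ᵐ x ∂Q, c ≤ x := by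
    rw [ae_iff]
    refine measure_mono_null ?_ hsupp
    intro x hx
    simp only [Set.mem_setOf_eq, not_le] at hx
    exact fun hmem => absurd (hsub hmem) (by simpa using hx)
  calc c = ∫ _, c ∂Q := by simp
    _ ≤ ∫ x, x ∂Q := integral_mono_ae (integrable_const c) hint hae

lemma ereal_sInf_le_of_closure {I : Set ℝ} (hI : I.Nonempty) {a : ℝ} (ha : a ∈ closure I) :
    sInf ((fun t : ℝ => (t : EReal)) '' I) ≤ (a : EReal) := by
  rw [sInf_le_iff]
  intro b hb
  induction b with
  | bot => exact bot_le
  | coe c =>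
      have hcI : ∀ x ∈ I, c ≤ x := fun x hx => EReal.coe_le_coe_iff.1 (hb ⟨x, hx, rfl⟩)
      have hsub : closure I ⊆ Set.Ici c := closure_minimal hcI isClosed_Ici
      exact_mod_cast EReal.coe_le_coe_iff.2 (hsub ha)
  | top =>
      obtain ⟨x, hx⟩ := hI
      exact absurd (hb ⟨x, hx, rfl⟩) (not_le.2 (EReal.coe_lt_top x))

/- ## Main theorem -/

/-- Best-case expected value over a `1`-Wasserstein ball around an empirical
distribution on an interval: `inf = max(mean − ε, inf I)`. -/
theorem statement16 {N : ℕ} (hN : 0 < N)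
    (I : Set ℝ) (hI : I.Nonempty) (hIc : I.OrdConnected)
    (ζ : Fin N → ℝ) (hζ : ∀ i, ζ i ∈ I) (ε : ℝ) (hε : 0 < ε) :
    sInf ((fun Q : Measure ℝ => ((∫ t, t ∂Q : ℝ) : EReal)) ''
        realWassersteinBall 1 (closure I) (empMeasure ζ) ε) =
    max (((1 / (N : ℝ)) * ∑ i, ζ i - ε : ℝ) : EReal)
      (sInf ((fun t : ℝ => (t : EReal)) '' I)) := by
  have hNr : (0:ℝ) < N := by exact_mod_cast hN
  set m : ℝ := (1/(N:ℝ)) * ∑ i, ζ i with hm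
  -- lower bound: every element of the ball has mean ≥ both candidates
  have hLB : ∀ v ∈ ((fun Q : Measure ℝ => ((∫ t, t ∂Q : ℝ) : EReal)) ''
      realWassersteinBall 1 (closure I) (empMeasure ζ) ε),
      max ((m - ε : ℝ) : EReal) (sInf ((fun t : ℝ => (t : EReal)) '' I)) ≤ v := by
    rintro v ⟨Q, ⟨hQprob, hQsupp, hQmom, hQW⟩, rfl⟩
    haveI := hQprob
    have hQint : Integrable (fun x : ℝ => x) Q := aux_integrable_of_moment hQmom
    refine max_le ?_ ?_
    · have hmom' : (∫⁻ x, ENNReal.ofReal |x| ∂Q) < ⊤ := by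
        simpa [Real.rpow_one] using hQmom
      rw [wd_one] at hQW
      exact EReal.coe_le_coe_iff.2 (wasserstein_mean_lb hN ζ Q hmom' hε hQW)
    · rw [sInf_le_iff]
      intro b hb
      induction b with
      | bot => exact bot_le
      | coe c =>
          have hcI : ∀ x ∈ I, c ≤ x := fun x hx => EReal.coe_le_coe_iff.1 (hb ⟨x, hx, rfl⟩)
          exact EReal.coe_le_coe_iff.2 (support_mean_lb hQsupp hQint hcI)
      | top =>
          obtain ⟨x, hx⟩ := hI
          exact absurd (hb ⟨x, hx, rfl⟩) (not_le.2 (EReal.coe_lt_top x))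
  refine le_antisymm ?_ (le_sInf hLB)
  -- upper bound: exhibit a measure attaining the max
  by_cases hbd : BddBelow I
  · set a : ℝ := sInf I with hadef
    have ha_cl : a ∈ closure I := csInf_mem_closure hI hbd
    have ha_le : ∀ i, a ≤ ζ i := fun i => csInf_le hbd (hζ i)
    have ham : a ≤ m := by
      have h1 : (N:ℝ) * a ≤ ∑ i, ζ i := by
        simpa using Finset.sum_le_sum (fun i (_ : i ∈ Finset.univ) => ha_le i)
      rw [hm]
      rw [div_mul_eq_mul_div, le_div_iff₀ hNr]
      linarith
    by_cases hcase : ε ≤ m - a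
    · -- partial transport: mean = m - ε
      have hma : 0 < m - a := lt_of_lt_of_le hε hcase
      set t : ℝ := ε / (m - a) with htdef
      have ht0 : 0 ≤ t := by positivity
      have ht1 : t ≤ 1 := (div_le_one hma).2 hcase
      have htm : t * (m - a) = ε := div_mul_cancel₀ ε hma.ne'
      have hmem := QC_mem ζ a t hN hζ ha_cl ha_le ht0 ht1 (le_of_eq htm)
      have hmean : ∫ x, x ∂(QC ζ a t) = m - ε := by
        rw [QC_mean ζ a t hN ht0 ht1, ← hm]
        nlinarith [htm]
      have hle : sInf ((fun Q : Measure ℝ => ((∫ t, t ∂Q : ℝ) : EReal)) ''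
          realWassersteinBall 1 (closure I) (empMeasure ζ) ε) ≤ ((m - ε : ℝ) : EReal) := by
        refine sInf_le ⟨QC ζ a t, hmem, ?_⟩
        show ((∫ x, x ∂(QC ζ a t) : ℝ) : EReal) = ((m - ε : ℝ) : EReal)
        rw [hmean]
      refine le_trans hle ?_
      exact le_max_left _ _
    · -- full transport to a: mean = a
      push_neg at hcase
      have hmem := QC_mem ζ a 1 hN hζ ha_cl ha_le (by norm_num) (le_refl 1)
        (ε := ε) (by rw [← hm]; linarith)
      have hmean : ∫ x, x ∂(QC ζ a 1) = a := by
        rw [QC_mean ζ a 1 hN (by norm_num) (le_refl 1)]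
        ring
      have hle : sInf ((fun Q : Measure ℝ => ((∫ t, t ∂Q : ℝ) : EReal)) ''
          realWassersteinBall 1 (closure I) (empMeasure ζ) ε) ≤ ((a : ℝ) : EReal) := by
        refine sInf_le ⟨QC ζ a 1, hmem, ?_⟩
        show ((∫ x, x ∂(QC ζ a 1) : ℝ) : EReal) = ((a : ℝ) : EReal)
        rw [hmean]
      refine le_trans hle ?_
      refine le_trans ?_ (le_max_right _ _)
      refine le_sInf ?_
      rintro y ⟨x, hx, rfl⟩
      exact EReal.coe_le_coe_iff.2 (csInf_le hbd hx)
  · -- unbounded below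
    haveI : Nonempty (Fin N) := Fin.pos_iff_nonempty.1 hN
    obtain ⟨a, haI, halt⟩ := not_bddBelow_iff.1 hbd
      (min (m - ε) (Finset.univ.inf' Finset.univ_nonempty ζ))
    have ha_le : ∀ i, a ≤ ζ i := fun i =>
      le_trans halt.le (le_trans (min_le_right _ _) (Finset.inf'_le _ (Finset.mem_univ i)))
    have ham : a < m - ε := lt_of_lt_of_le halt (min_le_left _ _)
    have hma : 0 < m - a := by linarith
    set t : ℝ := ε / (m - a) with htdef
    have ht0 : 0 ≤ t := by positivity
    have ht1 : t ≤ 1 := (div_le_one hma).2 (by linarith)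
    have htm : t * (m - a) = ε := div_mul_cancel₀ ε hma.ne'
    have hmem := QC_mem ζ a t hN hζ (subset_closure haI) ha_le ht0 ht1 (le_of_eq htm)
    have hmean : ∫ x, x ∂(QC ζ a t) = m - ε := by
      rw [QC_mean ζ a t hN ht0 ht1, ← hm]
      nlinarith [htm]
    have hle : sInf ((fun Q : Measure ℝ => ((∫ t, t ∂Q : ℝ) : EReal)) ''
        realWassersteinBall 1 (closure I) (empMeasure ζ) ε) ≤ ((m - ε : ℝ) : EReal) := by
      refine sInf_le ⟨QC ζ a t, hmem, ?_⟩
      show ((∫ x, x ∂(QC ζ a t) : ℝ) : EReal) = ((m - ε : ℝ) : EReal)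
      rw [hmean]
    exact le_trans hle (le_max_left _ _)
end
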